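/- Let T be an observation table, (≡,f) a merging map on T, and M the transducer resulting from (≡,f). Then for every u∈P_T: if f(u) is undefined then u has no run in M starting from the initial state q_ε, and if f(u) is defined then q_ε→*^{u|f(u)}q_u in M (the run of u from q_ε reaches the state q_u and produces output f(u)). -/

import Mathlib

attribute [local instance] Classical.propDecidable

/-- A subsequential string transducer with input alphabet `σ` and output alphabet `γ`. -/
structure Transducer (σ : Type) (γ : Type) : Type 1 where
  Q : Type
  fin : Finite Q
  q0 : Q
  w0 : List γ
  δ : Q → σ → Option (Q × List γ)
  δF : Q → Option (List γ)

namespace Transducer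

variable {σ γ : Type}

/-- The run relation `q →*^{u|w} q'`, as a function: from state `q`, reading `u`,
we reach the returned state producing the returned (concatenated) output. -/
def runFrom (M : Transducer σ γ) : M.Q → List σ → Option (M.Q × List γ)
  | q, [] => some (q, [])
  | q, a :: u =>
    (M.δ q a).bind fun x =>
      (M.runFrom x.1 u).map fun y => (y.1, x.2 ++ y.2)

/-- The semantics `⟦M⟧` of a transducer, as a partial function `Σ* → Γ*`. -/
def sem (M : Transducer σ γ) (u : List σ) : Option (List γ) :=
  (M.runFrom M.q0 u).bind fun x => (M.δF x.1).map fun w' => M.w0 ++ x.2 ++ w'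

/-- The number of states `|M|` of a transducer. -/
noncomputable def size (M : Transducer σ γ) : ℕ := Nat.card M.Q

/-- The run of `v` in `M` (from the initial state) uses the transition out of
state `q` reading letter `a`. -/
def usesTransition (M : Transducer σ γ) (q : M.Q) (a : σ) (v : List σ) : Prop :=
  ∃ (vp vs : List σ) (w : List γ), v = vp ++ a :: vs ∧ M.runFrom M.q0 vp = some (q, w)

/-- Modify the transition function of `M` at `(q, a)`: replace it by `o`
(`o = none` deletes the transition, `o = some (q', w)` makes it `q →^{a|w} q'`). -/
noncomputable def modifyDelta (M : Transducer σ γ) (q : M.Q) (a : σ)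
    (o : Option (M.Q × List γ)) : Transducer σ γ :=
  { M with δ := fun p b => if p = q ∧ b = a then o else M.δ p b }

/-- The product transducer `M × A` of a transducer and a DFA. -/
noncomputable def prodDFA {Q : Type} [Finite Q] (M : Transducer σ γ) (A : DFA σ Q) :
    Transducer σ γ where
  Q := M.Q × Q
  fin := by have := M.fin; infer_instance
  q0 := (M.q0, A.start)
  w0 := M.w0
  δ := fun qp a => (M.δ qp.1 a).map fun x => ((x.1, A.step qp.2 a), x.2)
  δF := fun qp => if qp.2 ∈ A.accept then M.δF qp.1 else none

end Transducer

/-- A table entry: a word of `Γ*`, the wildcard `#`, or `⊥`. -/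
inductive TVal (γ : Type) : Type where
  | word : List γ → TVal γ
  | hash : TVal γ
  | bot  : TVal γ

/-- An observation table for a target partial function `τ` with regular domain
upper bound `Up`, based on a finite prefix-closed set `P` and a finite
suffix-closed set `S` (both containing `ε`). -/
structure ObsTable (σ γ : Type) where
  P : Finset (List σ)
  S : Finset (List σ)
  eps_mem_P : ([] : List σ) ∈ P
  eps_mem_S : ([] : List σ) ∈ S
  prefixClosed : ∀ u ∈ P, ∀ v : List σ, v <+: u → v ∈ P
  suffixClosed : ∀ u ∈ S, ∀ v : List σ, v <:+ u → v ∈ S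
  Up : Language σ
  regular : ∃ (n : ℕ) (A : DFA σ (Fin n)), A.accepts = Up
  τ : List σ → Option (List γ)
  dom_subset : ∀ u : List σ, (τ u).isSome → u ∈ Up

namespace ObsTable

variable {σ γ : Type}

/-- The set `P ∪ PΣ`. -/
def rowIdx (T : ObsTable σ γ) : Set (List σ) :=
  ↑T.P ∪ {x | ∃ p ∈ T.P, ∃ a : σ, x = p ++ [a]}

/-- The set `(P ∪ PΣ)·S` on which the table is defined. -/
def rows (T : ObsTable σ γ) : Set (List σ) :=
  {x | ∃ u ∈ T.rowIdx, ∃ v ∈ T.S, x = u ++ v}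

/-- The table entry at `x`: `#` if `x ∉ Up`, `⊥` if `x ∈ Up ∖ dom τ`, and `τ x` otherwise. -/
noncomputable def val (T : ObsTable σ γ) (x : List σ) : TVal γ :=
  if x ∈ T.Up then
    match T.τ x with
    | some w => TVal.word w
    | none => TVal.bot
  else TVal.hash

/-- `P_T`: the set of prefixes of elements of `(P ∪ PΣ)·S`. -/
def PT (T : ObsTable σ γ) : Set (List σ) := {u | ∃ x ∈ T.rows, u <+: x}

/-- `P_Γ`: those `u ∈ P_T` having an extension whose table entry is a word of `Γ*`. -/
def PGamma (T : ObsTable σ γ) : Set (List σ) :=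
  {u | u ∈ T.PT ∧ ∃ v : List σ, u ++ v ∈ T.rows ∧ ∃ w, T.val (u ++ v) = TVal.word w}

/-- A transducer `M` is compatible with the table `T`. -/
def Compatible (T : ObsTable σ γ) (M : Transducer σ γ) : Prop :=
  ∀ x ∈ T.rows,
    (∀ w, T.val x = TVal.word w → M.sem x = some w) ∧
    (T.val x = TVal.bot → M.sem x = none)

lemma rowIdx_finite [Finite σ] (T : ObsTable σ γ) : T.rowIdx.Finite := by
  refine Set.Finite.union T.P.finite_toSet ?_
  have h : {x : List σ | ∃ p ∈ T.P, ∃ a : σ, x = p ++ [a]}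
      ⊆ (fun pa : List σ × σ => pa.1 ++ [pa.2]) '' ((↑T.P : Set (List σ)) ×ˢ (Set.univ : Set σ)) := by
    rintro x ⟨p, hp, a, rfl⟩
    exact ⟨(p, a), ⟨hp, trivial⟩, rfl⟩
  exact ((T.P.finite_toSet.prod Set.finite_univ).image _).subset h

lemma rows_finite [Finite σ] (T : ObsTable σ γ) : T.rows.Finite := by
  have h : T.rows ⊆ (fun uv : List σ × List σ => uv.1 ++ uv.2) '' (T.rowIdx ×ˢ (↑T.S : Set (List σ))) := by
    rintro x ⟨u, hu, v, hv, rfl⟩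
    exact ⟨(u, v), ⟨hu, hv⟩, rfl⟩
  exact (((rowIdx_finite T).prod T.S.finite_toSet).image _).subset h

lemma PT_finite [Finite σ] (T : ObsTable σ γ) : T.PT.Finite := by
  have h : T.PT ⊆ ⋃ x ∈ T.rows, {u : List σ | u ∈ x.inits} := by
    rintro u ⟨x, hx, hpre⟩
    exact Set.mem_biUnion hx (by simpa [List.mem_inits] using hpre)
  refine (Set.Finite.biUnion (rows_finite T) fun x _ => ?_).subset h
  exact x.inits.finite_toSet

end ObsTable

/-- A merging map `(≡, f)` on an observation table `T`. -/
structure MergingMap {σ γ : Type} (T : ObsTable σ γ) where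
  rel : List σ → List σ → Prop
  f : List σ → Option (List γ)
  rel_mem : ∀ u v : List σ, rel u v → u ∈ T.PT ∧ v ∈ T.PT
  rel_refl : ∀ u ∈ T.PT, rel u u
  rel_symm : ∀ {u v : List σ}, rel u v → rel v u
  rel_trans : ∀ {u v w : List σ}, rel u v → rel v w → rel u w
  f_mem : ∀ u : List σ, (f u).isSome → u ∈ T.PT
  cond1 : ∀ u v : List σ, f u = none → rel u v → f v = none
  cond2 : ∀ (u v : List σ) (w : List γ), u ∈ T.PT → u ++ v ∈ T.rows →
    T.val (u ++ v) = TVal.word w → ∃ x, f u = some x ∧ x <+: w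
  cond3 : ∀ (u : List σ) (a : σ) (w : List γ), f (u ++ [a]) = some w →
    ∃ x, f u = some x ∧ x <+: w
  cond4 : ∀ (u u' : List σ) (a : σ) (wu : List γ), f u = some wu → rel u u' →
    u ++ [a] ∈ T.PT → u' ++ [a] ∈ T.PT →
    rel (u ++ [a]) (u' ++ [a]) ∧
    ∀ wua, f (u ++ [a]) = some wua →
      ∃ (wu' x : List γ), f u' = some wu' ∧ wua = wu ++ x ∧ f (u' ++ [a]) = some (wu' ++ x)
  cond5 : ∀ (u u' : List σ) (w : List γ), u ∈ T.rows → T.val u = TVal.word w → rel u u' →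
    (u' ∈ T.rows → T.val u' ≠ TVal.bot) ∧
    ∀ w', u' ∈ T.rows → T.val u' = TVal.word w' →
      ∃ (x fu fu' : List γ), f u = some fu ∧ f u' = some fu' ∧ w = fu ++ x ∧ w' = fu' ++ x
  cond6 : ∀ (u : List σ) (a : σ), (f (u ++ [a])).isSome →
    (¬ ∃ v, rel u v ∧ v ++ [a] ∈ T.PGamma) → f (u ++ [a]) = f u

namespace MergingMap

variable {σ γ : Type} {T : ObsTable σ γ}

/-- The `≡`-class of `u`. -/
def cls (m : MergingMap T) (u : List σ) : Set (List σ) := {v | m.rel u v}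

/-- The set of `≡`-classes meeting `dom f`. -/
def classes (m : MergingMap T) : Set (Set (List σ)) :=
  {C | ∃ u : List σ, (m.f u).isSome ∧ C = m.cls u}

/-- The size of a merging map: the number of `≡`-classes meeting `dom f`. -/
noncomputable def size (m : MergingMap T) : ℕ := m.classes.ncard

lemma cls_mem_classes (m : MergingMap T) {u : List σ} (h : (m.f u).isSome) :
    m.cls u ∈ m.classes := ⟨u, h, rfl⟩

lemma classes_finite [Finite σ] (m : MergingMap T) : m.classes.Finite := by
  have h : m.classes ⊆ m.cls '' T.PT := by
    rintro C ⟨u, hu, rfl⟩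
    exact ⟨u, m.f_mem u hu, rfl⟩
  exact ((T.PT_finite).image _).subset h

/-- A muted pair `(u, a)` of a merging map. -/
def Muted (m : MergingMap T) (u : List σ) (a : σ) : Prop :=
  (m.f u).isSome ∧ (m.f (u ++ [a])).isSome ∧
    ¬ ∃ v, m.rel u v ∧ v ++ [a] ∈ T.PGamma

/-- An open end `(u, a)` of a merging map. -/
def OpenEnd (m : MergingMap T) (u : List σ) (a : σ) : Prop :=
  u ∈ T.PT ∧ ¬ ∃ v, m.rel u v ∧ v ++ [a] ∈ T.PT

/-- The transducer resulting from a merging map (assuming `f ε` is defined,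
so that the initial state exists). -/
noncomputable def resulting [Finite σ] (m : MergingMap T) (h0 : (m.f []).isSome) :
    Transducer σ γ where
  Q := {C : Set (List σ) // C ∈ m.classes}
  fin := m.classes_finite.to_subtype
  q0 := ⟨m.cls [], m.cls_mem_classes h0⟩
  w0 := (m.f []).get h0
  δ := fun q a =>
    if h : ∃ u : List σ, (m.f u).isSome ∧ (m.f (u ++ [a])).isSome ∧ q.1 = m.cls u then
      some (⟨m.cls (h.choose ++ [a]), m.cls_mem_classes h.choose_spec.2.1⟩,
        ((m.f (h.choose ++ [a])).get h.choose_spec.2.1).drop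
          ((m.f h.choose).get h.choose_spec.1).length)
    else none
  δF := fun q =>
    if h : ∃ u : List σ, (m.f u).isSome ∧ q.1 = m.cls u ∧ u ∈ T.rows ∧
        ∃ w, T.val u = TVal.word w then
      some (h.choose_spec.2.2.2.choose.drop ((m.f h.choose).get h.choose_spec.1).length)
    else none

/-- The state `q_u` of the resulting transducer associated with `u ∈ dom f`. -/
noncomputable def state [Finite σ] (m : MergingMap T) (h0 : (m.f []).isSome)
    {u : List σ} (h : (m.f u).isSome) : (m.resulting h0).Q :=
  ⟨m.cls u, m.cls_mem_classes h⟩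

/-- An open completion of a merging map, determined by a choice `g` of added
transitions (which, when used, must only be added at open ends, with output `ε`). -/
noncomputable def openCompletion [Finite σ] (m : MergingMap T) (h0 : (m.f []).isSome)
    (g : (m.resulting h0).Q → σ → Option ((m.resulting h0).Q)) : Transducer σ γ :=
  { m.resulting h0 with
    δ := fun q a =>
      match (m.resulting h0).δ q a with
      | some x => some x
      | none => (g q a).map fun q' => (q', ([] : List γ)) }

/-- The choice `g` of added transitions only adds transitions at open ends. -/
def ValidOpenChoice [Finite σ] (m : MergingMap T) (h0 : (m.f []).isSome)
    (g : (m.resulting h0).Q → σ → Option ((m.resulting h0).Q)) : Prop :=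
  ∀ (q : (m.resulting h0).Q) (a : σ), (g q a).isSome →
    ∃ u : List σ, q.1 = m.cls u ∧ m.OpenEnd u a

/-- The run of `x` in the open completion uses a muted or an open transition. -/
def usesMutedOrOpen [Finite σ] (m : MergingMap T) (h0 : (m.f []).isSome)
    (g : (m.resulting h0).Q → σ → Option ((m.resulting h0).Q)) (x : List σ) : Prop :=
  ∃ (vp : List σ) (a : σ) (vs : List σ) (q : (m.resulting h0).Q) (w : List γ),
    x = vp ++ a :: vs ∧
    (m.openCompletion h0 g).runFrom (m.openCompletion h0 g).q0 vp = some (q, w) ∧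
    ((∃ u, q.1 = m.cls u ∧ m.Muted u a) ∨ (m.resulting h0).δ q a = none)

end MergingMap

/-- The equivalence on `P_T` induced by a transducer: two words are related when
they reach the same state of `M` (or both fail to have a run). -/
def inducedRel {σ γ : Type} (M : Transducer σ γ) (T : ObsTable σ γ) (u v : List σ) : Prop :=
  u ∈ T.PT ∧ v ∈ T.PT ∧
    (M.runFrom M.q0 u).map Prod.fst = (M.runFrom M.q0 v).map Prod.fst

/-- Helper for the induced partial output function: walk through the word,
appending the transition output only when the step leads into `P_Γ` for
some equivalent word. -/
noncomputable def goF {σ γ : Type} (M : Transducer σ γ) (T : ObsTable σ γ) :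
    M.Q → List γ → List σ → Option (List γ)
  | _, acc, [] => some acc
  | q, acc, a :: rest =>
    (M.δ q a).bind fun x =>
      goF M T x.1
        (if ∃ v ∈ T.PT, (M.runFrom M.q0 v).map Prod.fst = some q ∧ v ++ [a] ∈ T.PGamma
          then acc ++ x.2 else acc) rest

/-- The partial output function induced by a transducer on `P_T`. -/
noncomputable def inducedF {σ γ : Type} (M : Transducer σ γ) (T : ObsTable σ γ)
    (u : List σ) : Option (List γ) :=
  if u ∈ T.PT then goF M T M.q0 M.w0 u else none

section Aux

variable {σ γ : Type}

lemma Transducer.runFrom_append (M : Transducer σ γ) (q : M.Q) (u v : List σ) :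
    M.runFrom q (u ++ v) = (M.runFrom q u).bind fun x =>
      (M.runFrom x.1 v).map fun y => (y.1, x.2 ++ y.2) := by
  induction u generalizing q with
  | nil =>
    simp only [List.nil_append, Transducer.runFrom, Option.bind_some]
    cases M.runFrom q v with
    | none => rfl
    | some z => simp
  | cons a u ih =>
    simp only [List.cons_append, Transducer.runFrom, List.append_eq]
    cases M.δ q a with
    | none => rfl
    | some x =>
      simp only [Option.bind_some]
      rw [ih x.1]
      cases M.runFrom x.1 u with
      | none => rfl
      | some y =>
        simp only [Option.map_some, Option.bind_some, Option.map_map]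
        cases M.runFrom y.1 v with
        | none => rfl
        | some z => simp [List.append_assoc]

lemma ObsTable.PT_prefix (T : ObsTable σ γ) {u v : List σ} (h : v <+: u)
    (hu : u ∈ T.PT) : v ∈ T.PT := by
  obtain ⟨x, hx, hp⟩ := hu
  exact ⟨x, hx, h.trans hp⟩

namespace MergingMap

variable {T : ObsTable σ γ}

lemma cls_eq_of_rel (m : MergingMap T) {u v : List σ} (h : m.rel u v) :
    m.cls u = m.cls v := by
  ext w
  exact ⟨fun hw => m.rel_trans (m.rel_symm h) hw, fun hw => m.rel_trans h hw⟩

lemma rel_of_cls_eq (m : MergingMap T) {u v : List σ} (hv : v ∈ T.PT)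
    (h : m.cls u = m.cls v) : m.rel u v := by
  have : v ∈ m.cls v := m.rel_refl v hv
  rw [← h] at this
  exact this

lemma f_isSome_of_rel (m : MergingMap T) {u v : List σ} (h : m.rel u v)
    (hu : (m.f u).isSome) : (m.f v).isSome := by
  by_contra hv
  have hvn : m.f v = none := Option.not_isSome_iff_eq_none.mp hv
  have := m.cond1 v u hvn (m.rel_symm h)
  simp [this] at hu

lemma resulting_delta_none [Finite σ] (m : MergingMap T) (h0 : (m.f []).isSome)
    (q : (m.resulting h0).Q) {u : List σ} (a : σ) (hq : q.1 = m.cls u)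
    (hfu : (m.f u).isSome) (hPT : u ++ [a] ∈ T.PT) (hna : m.f (u ++ [a]) = none) :
    (m.resulting h0).δ q a = none := by
  have hne : ¬ ∃ u' : List σ, (m.f u').isSome ∧ (m.f (u' ++ [a])).isSome ∧
      q.1 = m.cls u' := by
    rintro ⟨u', hfu', hfua', hq'⟩
    have hcls : m.cls u = m.cls u' := hq ▸ hq'
    have hrel : m.rel u u' := m.rel_of_cls_eq (m.f_mem u' hfu') hcls
    have hPT' : u' ++ [a] ∈ T.PT := m.f_mem _ hfua'
    have h4 := m.cond4 u' u a ((m.f u').get hfu') (Option.some_get hfu').symm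
      (m.rel_symm hrel) hPT' hPT
    obtain ⟨_, _, _, _, heq⟩ := h4.2 ((m.f (u' ++ [a])).get hfua')
      (Option.some_get hfua').symm
    rw [hna] at heq
    cases heq
  show (if h : _ then _ else _) = _
  exact dif_neg hne

lemma resulting_delta_some [Finite σ] (m : MergingMap T) (h0 : (m.f []).isSome)
    (q : (m.resulting h0).Q) {u : List σ} (a : σ) (hq : q.1 = m.cls u)
    (hfu : (m.f u).isSome) (hPT : u ++ [a] ∈ T.PT) {wua : List γ}
    (ha : m.f (u ++ [a]) = some wua) :
    ∃ (q' : (m.resulting h0).Q) (x : List γ),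
      (m.resulting h0).δ q a = some (q', x) ∧ q'.1 = m.cls (u ++ [a]) ∧
      (m.f u).get hfu ++ x = wua := by
  have hex : ∃ u' : List σ, (m.f u').isSome ∧ (m.f (u' ++ [a])).isSome ∧
      q.1 = m.cls u' := ⟨u, hfu, by simp [ha], hq⟩
  have hδ : (m.resulting h0).δ q a =
      some (⟨m.cls (hex.choose ++ [a]), m.cls_mem_classes hex.choose_spec.2.1⟩,
        ((m.f (hex.choose ++ [a])).get hex.choose_spec.2.1).drop
          ((m.f hex.choose).get hex.choose_spec.1).length) := by
    show (if h : _ then _ else _) = _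
    exact dif_pos hex
  set c := hex.choose with hc
  obtain ⟨hfc, hfca, hqc⟩ := hex.choose_spec
  have hcls : m.cls u = m.cls c := hq ▸ hqc
  have hrel : m.rel u c := m.rel_of_cls_eq (m.f_mem c hfc) hcls
  have h4 := m.cond4 u c a ((m.f u).get hfu) (Option.some_get hfu).symm hrel hPT
    (m.f_mem _ hfca)
  obtain ⟨wc, x, hwc, hwua, hfcax⟩ := h4.2 wua ha
  refine ⟨_, _, hδ, ?_, ?_⟩
  · exact (m.cls_eq_of_rel h4.1).symm
  · have h1 : (m.f (c ++ [a])).get hfca = wc ++ x := by simp [hfcax]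
    have h2 : (m.f c).get hfc = wc := by simp [hwc]
    rw [h1, h2, List.drop_left' rfl, ← hwua]

end MergingMap

end Aux

/-- In the transducer resulting from a merging map, for `u ∈ P_T`:
if `f u` is undefined then `u` has no run from the initial state, and if
`f u = w` then the run of `u` reaches the state `q_u` producing total output
`w` (initial production included). -/
theorem resulting_run {σ γ : Type} [Finite σ] [Finite γ]
    (T : ObsTable σ γ) (m : MergingMap T) (h0 : (m.f []).isSome)
    (u : List σ) (hu : u ∈ T.PT) :
    (m.f u = none →
      (m.resulting h0).runFrom (m.resulting h0).q0 u = none) ∧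
    (∀ w : List γ, m.f u = some w →
      ∃ (q : (m.resulting h0).Q) (w' : List γ),
        (m.resulting h0).runFrom (m.resulting h0).q0 u = some (q, w') ∧
        q.1 = m.cls u ∧ (m.resulting h0).w0 ++ w' = w) := by
  induction u using List.reverseRecOn with
  | nil =>
    refine ⟨fun h => ?_, fun w hw => ?_⟩
    · simp [h] at h0
    · refine ⟨(m.resulting h0).q0, [], rfl, rfl, ?_⟩
      show (m.f []).get h0 ++ [] = w
      simp [hw]
  | append_singleton u a ih =>
    have huPT : u ∈ T.PT := T.PT_prefix (List.prefix_append u [a]) hu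
    obtain ⟨ihn, ihs⟩ := ih huPT
    constructor
    · intro hna
      rw [Transducer.runFrom_append]
      cases hfu : m.f u with
      | none => rw [ihn hfu]; rfl
      | some wu =>
        obtain ⟨q, w', hrun, hcls, hw0⟩ := ihs wu hfu
        rw [hrun]
        have hδ := m.resulting_delta_none h0 q a hcls (by simp [hfu]) hu hna
        simp [Transducer.runFrom, hδ]
    · intro w hw
      have hfu : (m.f u).isSome := by
        obtain ⟨x, hx, _⟩ := m.cond3 u a w hw
        simp [hx]
      obtain ⟨q, w', hrun, hcls, hw0⟩ := ihs ((m.f u).get hfu) (Option.some_get hfu).symm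
      obtain ⟨q', x, hδ, hq', hx⟩ := m.resulting_delta_some h0 q a hcls hfu hu hw
      refine ⟨q', w' ++ x, ?_, hq', ?_⟩
      · rw [Transducer.runFrom_append, hrun]
        simp [Transducer.runFrom, hδ]
      · rw [← List.append_assoc, hw0, hx]
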